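/- Let n = 3t + r with r ∈ {0,1,2} and t ≥ 1. There exists a 2-edge-coloring of the complete graph K_n with no monochromatic cycle of length greater than 2t + r. Explicitly, partition the vertices into U_1 of size 2t+r and U_2 of size t, color all edges inside U_1 and inside U_2 blue, and all edges between U_1 and U_2 red; then no monochromatic cycle has length exceeding 2t+r. -/

import Mathlib

/-- `G` contains a cycle of length `ℓ`. -/
def hasCycleLength {V : Type*} (G : SimpleGraph V) (ℓ : ℕ) : Prop :=
  ∃ (u : V) (c : G.Walk u u), c.IsCycle ∧ c.length = ℓ

private lemma nodup_length_le {V : Type*} [Fintype V] [DecidableEq V]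
    (l : List V) (hl : l.Nodup) (Q : V → Bool) (h : ∀ v ∈ l, Q v = true) :
    l.length ≤ (Finset.univ.filter fun v => Q v = true).card := by
  rw [← List.toFinset_card_of_nodup hl]
  apply Finset.card_le_card
  intro x hx
  rw [List.mem_toFinset] at hx
  simp [h x hx]

private lemma countP_le {V : Type*} [Fintype V] [DecidableEq V]
    (l : List V) (hl : l.Nodup) (Q : V → Bool) :
    l.countP Q ≤ (Finset.univ.filter fun v => Q v = true).card := by
  rw [List.countP_eq_length_filter]
  exact nodup_length_le _ (hl.filter Q) Q (fun v hv => List.of_mem_filter hv)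

private lemma altCount {V : Type*} (G : SimpleGraph V) (P : V → Bool)
    (hG : ∀ ⦃x y⦄, G.Adj x y → P x = !P y) :
    ∀ {a b : V} (p : G.Walk a b),
      2 * p.support.countP P
        = p.length + (if P a then 1 else 0) + (if P b then 1 else 0) := by
  intro a b p
  induction p with
  | nil =>
    simp only [SimpleGraph.Walk.support_nil, SimpleGraph.Walk.length_nil,
      List.countP_cons, List.countP_nil]
    split <;> simp
  | @cons a b c h p ih =>
    have hab := hG h
    simp only [SimpleGraph.Walk.support_cons, SimpleGraph.Walk.length_cons,
      List.countP_cons]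
    cases hb : P b <;> rw [hb] at hab <;>
      simp only [Bool.not_false, Bool.not_true] at hab <;>
      cases hcc : P c <;> simp [hab, hb, hcc] at ih ⊢ <;> omega

private lemma sameSide {V : Type*} (G : SimpleGraph V) (P : V → Bool)
    (hG : ∀ ⦃x y⦄, G.Adj x y → P x = P y) :
    ∀ {a b : V} (p : G.Walk a b) {v : V}, v ∈ p.support → P v = P a := by
  intro a b p
  induction p with
  | nil => intro v hv; simp at hv; subst hv; rfl
  | @cons a b c h p ih =>
    intro v hv
    simp only [SimpleGraph.Walk.support_cons, List.mem_cons] at hv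
    rcases hv with rfl | hv
    · rfl
    · rw [ih hv, ← hG h]

theorem stmt1 (t r n : ℕ) (ht : 1 ≤ t) (hr : r ≤ 2) (hn : n = 3 * t + r) :
    -- red edges: between `U₁ = {v : v < 2t + r}` and `U₂ = {v : v ≥ 2t + r}`
    let R : SimpleGraph (Fin n) :=
      SimpleGraph.fromRel (fun v w => v.val < 2 * t + r ∧ ¬ w.val < 2 * t + r)
    -- blue edges: inside `U₁` and inside `U₂`
    let B : SimpleGraph (Fin n) :=
      SimpleGraph.fromRel (fun v w => (v.val < 2 * t + r ↔ w.val < 2 * t + r))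
    R ⊔ B = ⊤ ∧
      ∀ ℓ : ℕ, 2 * t + r < ℓ → ¬ hasCycleLength R ℓ ∧ ¬ hasCycleLength B ℓ := by
  intro R B
  set m := 2 * t + r with hm
  -- cardinality bounds
  have hcard1 : (Finset.univ.filter fun v : Fin n => decide ((v : ℕ) < m) = true).card ≤ m := by
    calc (Finset.univ.filter fun v : Fin n => decide ((v : ℕ) < m) = true).card
        ≤ (Finset.range m).card := by
          refine Finset.card_le_card_of_injOn (fun v : Fin n => (v : ℕ)) ?_ ?_
          · intro v hv
            simp only [Finset.coe_filter, Finset.mem_univ, true_and, Set.mem_setOf_eq, decide_eq_true_eq] at hv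
            simpa using hv
          · intro x _ y _ hxy; exact Fin.val_injective hxy
      _ = m := Finset.card_range m
  have hcard2 : (Finset.univ.filter fun v : Fin n => (!decide ((v : ℕ) < m)) = true).card ≤ t := by
    calc (Finset.univ.filter fun v : Fin n => (!decide ((v : ℕ) < m)) = true).card
        ≤ (Finset.Ico m n).card := by
          refine Finset.card_le_card_of_injOn (fun v : Fin n => (v : ℕ)) ?_ ?_
          · intro v hv
            simp only [Finset.mem_filter, Bool.not_eq_true', decide_eq_false_iff_not,
              not_lt] at hv
            simpa [Finset.mem_Ico, v.isLt] using hv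
          · intro x _ y _ hxy; exact Fin.val_injective hxy
      _ = n - m := Nat.card_Ico m n
      _ ≤ t := by omega
  refine ⟨?_, ?_⟩
  · ext v w
    simp only [SimpleGraph.sup_adj, SimpleGraph.fromRel_adj, SimpleGraph.top_adj, R, B]
    constructor
    · rintro (⟨h, _⟩ | ⟨h, _⟩) <;> exact h
    · intro h
      by_cases hv : (v : ℕ) < m <;> by_cases hw : (w : ℕ) < m <;> tauto
  · intro ℓ hℓ
    constructor
    · rintro ⟨u, c, hc, hlen⟩
      set P : Fin n → Bool := fun v => !decide ((v : ℕ) < m) with hP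
      have hAdj : ∀ ⦃x y : Fin n⦄, R.Adj x y → P x = !P y := by
        intro x y hxy
        rw [SimpleGraph.fromRel_adj] at hxy
        rcases hxy with ⟨_, h | h⟩ <;> rw [← hm] at h <;> simp [hP, h.1, h.2]
      have key := altCount R P hAdj c
      rw [c.support_eq_cons, List.countP_cons] at key
      have htail : 2 * c.support.tail.countP P = ℓ := by
        by_cases hu : P u = true <;> simp [hu] at key <;> omega
      have hbound : c.support.tail.countP P ≤ t :=
        le_trans (countP_le c.support.tail hc.support_nodup P) hcard2
      omega
    · rintro ⟨u, c, hc, hlen⟩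
      set P : Fin n → Bool := fun v => decide ((v : ℕ) < m) with hP
      have hAdj : ∀ ⦃x y : Fin n⦄, B.Adj x y → P x = P y := by
        intro x y hxy
        rw [SimpleGraph.fromRel_adj] at hxy
        rcases hxy with ⟨_, h | h⟩ <;> simp [hP] <;> tauto
      have hall : ∀ v ∈ c.support.tail, P v = P u := by
        intro v hv
        exact sameSide B P hAdj c (List.mem_of_mem_tail hv)
      have hlen' : c.support.tail.length = ℓ := by
        have h2 := c.length_support
        rw [c.support_eq_cons, List.length_cons] at h2
        omega
      by_cases hu : P u = true
      · have hb : c.support.tail.length ≤ m :=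
          le_trans (nodup_length_le c.support.tail hc.support_nodup P
            (fun v hv => by rw [hall v hv, hu])) hcard1
        omega
      · have hu' : P u = false := by simpa using hu
        have hb : c.support.tail.length ≤ t :=
          le_trans (nodup_length_le c.support.tail hc.support_nodup (fun v => !P v)
            (fun v hv => by show (!P v) = true; rw [hall v hv, hu']; rfl)) hcard2
        omega
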